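/- Consider the firefighter process on a finite rooted tree T with fire starting at the root s. For every strategy there exists a strategy saving at least as many vertices such that, for some integer ℓ ≥ 0, exactly one vertex is protected at each depth 1, …, ℓ, no vertex is protected at depth greater than ℓ, and every proper ancestor of every protected vertex burns. -/

import Mathlib

attribute [local instance] Classical.propDecidable

/-- A finite rooted tree, given by a parent function and a depth function. -/
structure FFTree (V : Type*) where
  root : V
  parent : V → V
  depth : V → ℕ
  depth_root : depth root = 0
  parent_root : parent root = root
  depth_parent : ∀ v, v ≠ root → depth v = depth (parent v) + 1

namespace FFTree

variable {V : Type*} [Fintype V] [DecidableEq V] (T : FFTree V)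

/-- `u` is an ancestor of `v` (possibly `u = v`). -/
def IsAncestor (u v : V) : Prop := ∃ n : ℕ, T.parent^[n] v = u

/-- The subtree rooted at `v`: all descendants of `v`, including `v`. -/
noncomputable def subtree (v : V) : Finset V :=
  Finset.univ.filter (fun u => T.IsAncestor v u)

/-- The children of a vertex. -/
noncomputable def children (v : V) : Finset V :=
  Finset.univ.filter (fun u => u ≠ T.root ∧ T.parent u = v)

/-- The set of vertices burned by the end of time step `t` in the firefighter
process on the rooted tree, where the fire starts at the root and `p i` is the
vertex protected in round `i` (if any); in each round the protection happens
first and then the fire spreads from burning vertices to their unprotected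
children. -/
noncomputable def burn (p : ℕ → Option V) : ℕ → Finset V
  | 0 => {T.root}
  | t + 1 => burn p t ∪ Finset.univ.filter
      (fun v => v ≠ T.root ∧ T.parent v ∈ burn p t ∧ ∀ i ≤ t + 1, p i ≠ some v)

/-- `v` is protected at some round of the strategy `p`. -/
def Protected (p : ℕ → Option V) (v : V) : Prop := ∃ i, p i = some v

/-- A valid strategy: nothing is protected at time `0`, and a vertex protected in
round `t` is neither burned before round `t` nor previously protected. -/
def Valid (p : ℕ → Option V) : Prop :=
  p 0 = none ∧ ∀ t v, p t = some v → v ∉ T.burn p (t - 1) ∧ ∀ i < t, p i ≠ some v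

/-- `v` eventually burns under strategy `p`. -/
def Burns (p : ℕ → Option V) (v : V) : Prop := ∃ t, v ∈ T.burn p t

/-- `v` is saved (never burns) under strategy `p`. -/
def Saved (p : ℕ → Option V) (v : V) : Prop := ∀ t, v ∉ T.burn p t

/-- The number of vertices saved by strategy `p`. -/
noncomputable def savedCount (p : ℕ → Option V) : ℕ :=
  (Finset.univ.filter (T.Saved p)).card

/-- The number of vertices burned by strategy `p`. -/
noncomputable def burnedCount (p : ℕ → Option V) : ℕ :=
  (Finset.univ.filter (T.Burns p)).card

end FFTree

set_option linter.unusedSectionVars false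

namespace FFTree

variable {V : Type*} [Fintype V] [DecidableEq V] (T : FFTree V)

/-- `u` is timely protected: protected at some time at most its depth. -/
def TP (p : ℕ → Option V) (u : V) : Prop := ∃ i, i ≤ T.depth u ∧ p i = some u

lemma eq_root_of_depth_eq_zero {v : V} (h : T.depth v = 0) : v = T.root := by
  by_contra hv
  have := T.depth_parent v hv
  omega

lemma iter_parent_root (n : ℕ) : T.parent^[n] T.root = T.root := by
  induction n with
  | zero => rfl
  | succ n ih => rw [Function.iterate_succ_apply, T.parent_root, ih]

lemma iter_parent_eq_root : ∀ (n : ℕ) {v : V}, T.depth v ≤ n → T.parent^[n] v = T.root := by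
  intro n
  induction n with
  | zero =>
    intro v h
    exact T.eq_root_of_depth_eq_zero (Nat.le_zero.mp h)
  | succ n ih =>
    intro v h
    by_cases hv : v = T.root
    · subst hv; exact T.iter_parent_root _
    · rw [Function.iterate_succ_apply]
      exact ih (by have := T.depth_parent v hv; omega)

lemma depth_iter : ∀ (n : ℕ) {v : V}, n ≤ T.depth v →
    T.depth (T.parent^[n] v) + n = T.depth v := by
  intro n
  induction n with
  | zero => intro v _; simp
  | succ n ih =>
    intro v h
    have hv : v ≠ T.root := by
      intro e; subst e; rw [T.depth_root] at h; omega
    have hd := T.depth_parent v hv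
    rw [Function.iterate_succ_apply]
    have := ih (v := T.parent v) (by omega)
    omega

lemma isAncestor_refl (v : V) : T.IsAncestor v v := ⟨0, rfl⟩

lemma isAncestor_trans {u v w : V} (h1 : T.IsAncestor u v) (h2 : T.IsAncestor w u) :
    T.IsAncestor w v := by
  obtain ⟨n, hn⟩ := h1; obtain ⟨m, hm⟩ := h2
  exact ⟨m + n, by rw [Function.iterate_add_apply, hn, hm]⟩

lemma burn_zero (p : ℕ → Option V) : T.burn p 0 = {T.root} := rfl

lemma burn_succ (p : ℕ → Option V) (t : ℕ) :
    T.burn p (t + 1) = T.burn p t ∪ Finset.univ.filter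
      (fun v => v ≠ T.root ∧ T.parent v ∈ T.burn p t ∧ ∀ i ≤ t + 1, p i ≠ some v) := rfl

lemma depth_le_of_mem_burn (p : ℕ → Option V) :
    ∀ (t : ℕ) {v : V}, v ∈ T.burn p t → T.depth v ≤ t := by
  intro t
  induction t with
  | zero =>
    intro v hv
    rw [burn_zero, Finset.mem_singleton] at hv
    subst hv
    simp [T.depth_root]
  | succ t ih =>
    intro v hv
    rw [burn_succ, Finset.mem_union, Finset.mem_filter] at hv
    rcases hv with hv | ⟨-, hne, hpar, -⟩
    · exact (ih hv).trans (Nat.le_succ t)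
    · have := T.depth_parent v hne
      have := ih hpar
      omega

lemma tp_root {p : ℕ → Option V} (hp0 : p 0 = none) : ¬ T.TP p T.root := by
  rintro ⟨i, hi, he⟩
  rw [T.depth_root, Nat.le_zero] at hi
  subst hi
  rw [hp0] at he
  cases he

lemma mem_burn_iff {p : ℕ → Option V} (hp : T.Valid p) :
    ∀ (t : ℕ) (v : V), v ∈ T.burn p t ↔
      (T.depth v ≤ t ∧ ∀ n, ¬ T.TP p (T.parent^[n] v)) := by
  have hroot : ¬ T.TP p T.root := T.tp_root hp.1
  intro t
  induction t with
  | zero =>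
    intro v
    rw [burn_zero, Finset.mem_singleton]
    constructor
    · intro hv
      subst hv
      refine ⟨by simp [T.depth_root], fun n => by rw [T.iter_parent_root]; exact hroot⟩
    · rintro ⟨h1, -⟩
      exact T.eq_root_of_depth_eq_zero (Nat.le_zero.mp h1)
  | succ t ih =>
    intro v
    rw [burn_succ, Finset.mem_union, Finset.mem_filter]
    constructor
    · rintro (hv | ⟨-, hne, hpar, hnp⟩)
      · obtain ⟨h1, h2⟩ := (ih v).1 hv
        exact ⟨h1.trans (Nat.le_succ t), h2⟩
      · obtain ⟨h1, h2⟩ := (ih _).1 hpar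
        have hd := T.depth_parent v hne
        refine ⟨by omega, fun n => ?_⟩
        cases n with
        | zero =>
          rw [Function.iterate_zero_apply]
          rintro ⟨i, hi, he⟩
          exact hnp i (by omega) he
        | succ n =>
          rw [Function.iterate_succ_apply]
          exact h2 n
    · rintro ⟨h1, h2⟩
      rcases Nat.lt_or_ge t (T.depth v) with hle | hle
      · have hdv : T.depth v = t + 1 := by omega
        have hne : v ≠ T.root := by
          intro e; subst e; rw [T.depth_root] at hdv; omega
        have hd := T.depth_parent v hne
        refine Or.inr ⟨Finset.mem_univ v, hne,
          (ih _).2 ⟨by omega, fun n => ?_⟩, fun i hi he => ?_⟩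
        · rw [← Function.iterate_succ_apply]; exact h2 (n + 1)
        · exact h2 0 ⟨i, by simp only [Function.iterate_zero_apply]; omega, he⟩
      · exact Or.inl ((ih v).2 ⟨hle, h2⟩)

lemma burns_iff {p : ℕ → Option V} (hp : T.Valid p) (v : V) :
    T.Burns p v ↔ ∀ n, ¬ T.TP p (T.parent^[n] v) := by
  constructor
  · rintro ⟨t, ht⟩
    exact ((T.mem_burn_iff hp t v).1 ht).2
  · intro h
    exact ⟨T.depth v, (T.mem_burn_iff hp _ v).2 ⟨le_rfl, h⟩⟩

lemma saved_iff {p : ℕ → Option V} (hp : T.Valid p) (v : V) :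
    T.Saved p v ↔ ∃ n, T.TP p (T.parent^[n] v) := by
  rw [show T.Saved p v ↔ ¬ T.Burns p v from by simp [Saved, Burns], T.burns_iff hp v]
  simp

end FFTree
namespace FFTree

variable {V : Type*} [Fintype V] [DecidableEq V] (T : FFTree V)

lemma key : ∀ (N : ℕ) (S : Finset V),
    S.sum T.depth ≤ N →
    (∀ s ∈ S, 1 ≤ T.depth s) →
    (∀ s ∈ S, ∀ s' ∈ S, s ≠ s' → ¬ T.IsAncestor s s') →
    (∀ k, (S.filter (fun s => T.depth s ≤ k)).card ≤ k) →
    ∃ (ℓ : ℕ) (w : ℕ → V),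
      (∀ j, 1 ≤ j → j ≤ ℓ → T.depth (w j) = j) ∧
      (∀ i, 1 ≤ i → i ≤ ℓ → ∀ j, 1 ≤ j → j ≤ ℓ → i ≠ j → ¬ T.IsAncestor (w i) (w j)) ∧
      (∀ s ∈ S, ∃ j, 1 ≤ j ∧ j ≤ ℓ ∧ T.IsAncestor (w j) s) := by
  intro N
  induction N with
  | zero =>
    intro S hsum h1 _ _
    have hS : S = ∅ := by
      by_contra h
      obtain ⟨s, hs⟩ := Finset.nonempty_iff_ne_empty.mpr h
      have hle : T.depth s ≤ S.sum T.depth :=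
        Finset.single_le_sum (f := T.depth) (fun i _ => Nat.zero_le _) hs
      have := h1 s hs
      omega
    subst hS
    exact ⟨0, fun _ => T.root, by omega, by omega, by simp⟩
  | succ N ih =>
    intro S hsum h1 h2 h3
    by_cases hstep : ∃ s ∈ S,
        (S.filter (fun x => T.depth x ≤ T.depth s - 1)).card + 2 ≤ T.depth s
    · -- surgery case: replace s₀ by its parent, delete descendants of the parent
      obtain ⟨s₀, hs₀, hc⟩ := hstep
      have hd2 : 2 ≤ T.depth s₀ := by omega
      have hs₀ne : s₀ ≠ T.root := fun e => by rw [e, T.depth_root] at hd2; omega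
      have hdu : T.depth s₀ = T.depth (T.parent s₀) + 1 := T.depth_parent s₀ hs₀ne
      have hus₀ : T.IsAncestor (T.parent s₀) s₀ := ⟨1, by simp⟩
      set F : Finset V := S.filter (fun s => ¬ T.IsAncestor (T.parent s₀) s) with hF
      have hs₀F : s₀ ∉ F := by
        simp only [hF, Finset.mem_filter]
        tauto
      have huF : T.parent s₀ ∉ F := by
        simp only [hF, Finset.mem_filter]
        intro h
        exact h.2 (T.isAncestor_refl _)
      have hFS : ∀ x ∈ F, x ∈ S ∧ ¬ T.IsAncestor (T.parent s₀) x := by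
        intro x hx
        exact Finset.mem_filter.mp hx
      set S' : Finset V := insert (T.parent s₀) F with hS'
      -- sum decreases
      have hsum' : S'.sum T.depth ≤ N := by
        have e1 : S'.sum T.depth = T.depth (T.parent s₀) + F.sum T.depth :=
          Finset.sum_insert huF
        have e2 : F.sum T.depth ≤ (S.erase s₀).sum T.depth := by
          apply Finset.sum_le_sum_of_subset
          intro x hx
          exact Finset.mem_erase.mpr ⟨fun e => hs₀F (e ▸ hx), (hFS x hx).1⟩
        have e3 : (S.erase s₀).sum T.depth + T.depth s₀ = S.sum T.depth :=
          Finset.sum_erase_add _ _ hs₀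
        omega
      -- depths positive
      have h1' : ∀ s ∈ S', 1 ≤ T.depth s := by
        intro s hs
        rcases Finset.mem_insert.mp hs with rfl | hsF
        · omega
        · exact h1 s (hFS s hsF).1
      -- antichain
      have h2' : ∀ s ∈ S', ∀ s' ∈ S', s ≠ s' → ¬ T.IsAncestor s s' := by
        intro x hx y hy hxy hanc
        rcases Finset.mem_insert.mp hx with rfl | hxF
        · rcases Finset.mem_insert.mp hy with rfl | hyF
          · exact hxy rfl
          · exact (hFS y hyF).2 hanc
        · rcases Finset.mem_insert.mp hy with rfl | hyF
          · -- x ∈ F is an ancestor of parent s₀, hence a proper ancestor of s₀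
            have hxs₀ : x ≠ s₀ := fun e => hs₀F (e ▸ hxF)
            exact h2 x (hFS x hxF).1 s₀ hs₀ hxs₀ (T.isAncestor_trans hus₀ hanc)
          · exact h2 x (hFS x hxF).1 y (hFS y hyF).1 hxy hanc
      -- Hall condition
      have h3' : ∀ k, (S'.filter (fun s => T.depth s ≤ k)).card ≤ k := by
        intro k
        rcases Nat.lt_or_ge k (T.depth s₀ - 1) with hk | hk
        · have hsub : S'.filter (fun s => T.depth s ≤ k) ⊆
              S.filter (fun s => T.depth s ≤ k) := by
            intro x hx
            obtain ⟨hx1, hx2⟩ := Finset.mem_filter.mp hx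
            rcases Finset.mem_insert.mp hx1 with rfl | hxF
            · omega
            · exact Finset.mem_filter.mpr ⟨(hFS x hxF).1, hx2⟩
          exact le_trans (Finset.card_le_card hsub) (h3 k)
        · rcases Nat.lt_or_ge k (T.depth s₀) with hk2 | hk2
          · -- k = depth s₀ - 1
            have hsub : S'.filter (fun s => T.depth s ≤ k) ⊆
                insert (T.parent s₀) (S.filter (fun x => T.depth x ≤ T.depth s₀ - 1)) := by
              intro x hx
              obtain ⟨hx1, hx2⟩ := Finset.mem_filter.mp hx
              rcases Finset.mem_insert.mp hx1 with rfl | hxF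
              · exact Finset.mem_insert_self _ _
              · exact Finset.mem_insert_of_mem
                  (Finset.mem_filter.mpr ⟨(hFS x hxF).1, by omega⟩)
            have := Finset.card_le_card hsub
            have := Finset.card_insert_le (T.parent s₀)
              (S.filter (fun x => T.depth x ≤ T.depth s₀ - 1))
            omega
          · -- k ≥ depth s₀
            have hs₀mem : s₀ ∈ S.filter (fun s => T.depth s ≤ k) :=
              Finset.mem_filter.mpr ⟨hs₀, by omega⟩
            have hsub : S'.filter (fun s => T.depth s ≤ k) ⊆
                insert (T.parent s₀) ((S.filter (fun s => T.depth s ≤ k)).erase s₀) := by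
              intro x hx
              obtain ⟨hx1, hx2⟩ := Finset.mem_filter.mp hx
              rcases Finset.mem_insert.mp hx1 with rfl | hxF
              · exact Finset.mem_insert_self _ _
              · refine Finset.mem_insert_of_mem (Finset.mem_erase.mpr
                  ⟨fun e => hs₀F (e ▸ hxF), Finset.mem_filter.mpr ⟨(hFS x hxF).1, hx2⟩⟩)
            have hcard := Finset.card_erase_of_mem hs₀mem
            have := Finset.card_le_card hsub
            have := Finset.card_insert_le (T.parent s₀)
              ((S.filter (fun s => T.depth s ≤ k)).erase s₀)
            have hpos : 1 ≤ (S.filter (fun s => T.depth s ≤ k)).card :=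
              Finset.card_pos.mpr ⟨s₀, hs₀mem⟩
            have := h3 k
            omega
      obtain ⟨ℓ, w, hw1, hw2, hw3⟩ := ih S' hsum' h1' h2' h3'
      refine ⟨ℓ, w, hw1, hw2, fun s hs => ?_⟩
      by_cases hanc : T.IsAncestor (T.parent s₀) s
      · obtain ⟨j, hj1, hj2, hj3⟩ := hw3 (T.parent s₀) (Finset.mem_insert_self _ _)
        exact ⟨j, hj1, hj2, T.isAncestor_trans hanc hj3⟩
      · exact hw3 s (Finset.mem_insert_of_mem (Finset.mem_filter.mpr ⟨hs, hanc⟩))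
    · -- terminal case: S is "perfect"
      push_neg at hstep
      have hfull : ∀ s ∈ S,
          (S.filter (fun x => T.depth x ≤ T.depth s - 1)).card = T.depth s - 1 := by
        intro s hs
        have := h3 (T.depth s - 1)
        have := hstep s hs
        omega
      have hcs : ∀ s ∈ S,
          (S.filter (fun x => T.depth x ≤ T.depth s)).card = T.depth s := by
        intro s hs
        have hle := h3 (T.depth s)
        have h1s := h1 s hs
        have hsub : insert s (S.filter (fun x => T.depth x ≤ T.depth s - 1)) ⊆
            S.filter (fun x => T.depth x ≤ T.depth s) := by
          intro x hx
          rcases Finset.mem_insert.mp hx with rfl | hxf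
          · exact Finset.mem_filter.mpr ⟨hs, le_rfl⟩
          · obtain ⟨ha, hb⟩ := Finset.mem_filter.mp hxf
            exact Finset.mem_filter.mpr ⟨ha, by omega⟩
        have hnm : s ∉ S.filter (fun x => T.depth x ≤ T.depth s - 1) := by
          intro h
          have := (Finset.mem_filter.mp h).2
          omega
        have := Finset.card_le_card hsub
        rw [Finset.card_insert_of_notMem hnm, hfull s hs] at this
        omega
      -- existence of one vertex at each depth 1..|S|
      have hex : ∀ j, 1 ≤ j → j ≤ S.card → ∃ s ∈ S, T.depth s = j := by
        intro j hj1 hj2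
        have hA : (S.filter (fun s => j ≤ T.depth s)).Nonempty := by
          by_contra h
          rw [Finset.not_nonempty_iff_eq_empty, Finset.filter_eq_empty_iff] at h
          have heqS : S.filter (fun x => T.depth x ≤ j - 1) = S := by
            apply Finset.filter_true_of_mem
            intro x hx
            have := h hx
            omega
          have := h3 (j - 1)
          rw [heqS] at this
          omega
        obtain ⟨s₁, hs₁A, hmin⟩ := Finset.exists_min_image _ T.depth hA
        obtain ⟨hs₁, hjd⟩ := Finset.mem_filter.mp hs₁A
        have h1s₁ := h1 s₁ hs₁
        have heq : S.filter (fun x => T.depth x ≤ T.depth s₁ - 1) =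
            S.filter (fun x => T.depth x ≤ j - 1) := by
          apply Finset.filter_congr
          intro x hx
          constructor
          · intro hxd
            by_contra hxj
            have hxA : x ∈ S.filter (fun s => j ≤ T.depth s) :=
              Finset.mem_filter.mpr ⟨hx, by omega⟩
            have := hmin x hxA
            omega
          · intro hxd
            omega
        have := hfull s₁ hs₁
        rw [heq] at this
        have := h3 (j - 1)
        have : T.depth s₁ = j := by omega
        exact ⟨s₁, hs₁, this⟩
      -- uniqueness
      have huniq : ∀ s ∈ S, ∀ s' ∈ S, T.depth s = T.depth s' → s = s' := by
        intro s hs s' hs' hdd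
        have h1s := h1 s hs
        have hsplit : S.filter (fun x => T.depth x ≤ T.depth s) =
            S.filter (fun x => T.depth x ≤ T.depth s - 1) ∪
            S.filter (fun x => T.depth x = T.depth s) := by
          ext x
          simp only [Finset.mem_union, Finset.mem_filter]
          constructor
          · rintro ⟨hx, hd⟩
            rcases eq_or_lt_of_le hd with h | h
            exacts [Or.inr ⟨hx, h⟩, Or.inl ⟨hx, by omega⟩]
          · rintro (⟨hx, hd⟩ | ⟨hx, hd⟩)
            exacts [⟨hx, by omega⟩, ⟨hx, by omega⟩]
        have hdisj : Disjoint (S.filter (fun x => T.depth x ≤ T.depth s - 1))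
            (S.filter (fun x => T.depth x = T.depth s)) := by
          rw [Finset.disjoint_left]
          intro x hx1 hx2
          have := (Finset.mem_filter.mp hx1).2
          have := (Finset.mem_filter.mp hx2).2
          omega
        have hone : (S.filter (fun x => T.depth x = T.depth s)).card ≤ 1 := by
          have hu := Finset.card_union_of_disjoint hdisj
          rw [← hsplit, hcs s hs, hfull s hs] at hu
          omega
        exact Finset.card_le_one.mp hone s (Finset.mem_filter.mpr ⟨hs, rfl⟩)
          s' (Finset.mem_filter.mpr ⟨hs', hdd.symm⟩)
      -- depths bounded by |S|
      have hbd : ∀ s ∈ S, T.depth s ≤ S.card := by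
        intro s hs
        have := hcs s hs
        have := Finset.card_le_card (Finset.filter_subset
          (fun x => T.depth x ≤ T.depth s) S)
        omega
      -- the witness
      classical
      set w : ℕ → V := fun j =>
        if h : ∃ s, s ∈ S ∧ T.depth s = j then h.choose else T.root with hwdef
      have hwspec : ∀ j, (h : ∃ s, s ∈ S ∧ T.depth s = j) →
          w j ∈ S ∧ T.depth (w j) = j := by
        intro j hj
        have hwj : w j = hj.choose := by
          rw [hwdef]
          dsimp only
          rw [dif_pos hj]
        rw [hwj]
        exact ⟨hj.choose_spec.1, hj.choose_spec.2⟩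
      refine ⟨S.card, w, ?_, ?_, ?_⟩
      · intro j hj1 hj2
        obtain ⟨s, hs, hd⟩ := hex j hj1 hj2
        exact (hwspec j ⟨s, hs, hd⟩).2
      · intro i hi1 hi2 j hj1 hj2 hij
        obtain ⟨s, hs, hd⟩ := hex i hi1 hi2
        obtain ⟨s', hs', hd'⟩ := hex j hj1 hj2
        obtain ⟨hmi, hdi⟩ := hwspec i ⟨s, hs, hd⟩
        obtain ⟨hmj, hdj⟩ := hwspec j ⟨s', hs', hd'⟩
        apply h2 _ hmi _ hmj
        intro e
        rw [← hdi, ← hdj, e] at hij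
        exact hij rfl
      · intro s hs
        refine ⟨T.depth s, h1 s hs, hbd s hs, ?_⟩
        obtain ⟨hm, hd⟩ := hwspec (T.depth s) ⟨s, hs, rfl⟩
        rw [huniq _ hm s hs hd]
        exact T.isAncestor_refl s

end FFTree
/-- For every strategy on a rooted tree there is a strategy saving at least as
many vertices such that, for some `ℓ`, exactly one vertex is protected at each
depth `1, …, ℓ`, no vertex is protected at depth greater than `ℓ` (or at the
root), and every proper ancestor of every protected vertex burns. -/
theorem exists_normalized_optimal_strategy
    {V : Type*} [Fintype V] [DecidableEq V] (T : FFTree V)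
    (p : ℕ → Option V) (hp : T.Valid p) :
    ∃ q : ℕ → Option V, T.Valid q ∧ T.savedCount p ≤ T.savedCount q ∧
      ∃ ℓ : ℕ,
        (∀ i : ℕ, 1 ≤ i → i ≤ ℓ →
          ∃! v : V, FFTree.Protected q v ∧ T.depth v = i) ∧
        (∀ v : V, FFTree.Protected q v → 1 ≤ T.depth v ∧ T.depth v ≤ ℓ) ∧
        (∀ v : V, FFTree.Protected q v →
          ∀ u : V, T.IsAncestor u v → u ≠ v → T.Burns q u) := by
  classical
  have hrootTP : ¬ T.TP p T.root := T.tp_root hp.1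
  -- the set of minimal timely-protected vertices
  set S : Finset V := Finset.univ.filter
    (fun s => T.TP p s ∧ ∀ m, 1 ≤ m → ¬ T.TP p (T.parent^[m] s)) with hSdef
  have hSmem : ∀ s ∈ S, T.TP p s ∧ ∀ m, 1 ≤ m → ¬ T.TP p (T.parent^[m] s) := by
    intro s hs
    exact (Finset.mem_filter.mp hs).2
  have h1 : ∀ s ∈ S, 1 ≤ T.depth s := by
    intro s hs
    obtain ⟨⟨i, hi, he⟩, -⟩ := hSmem s hs
    have : i ≠ 0 := by
      intro e; subst e; rw [hp.1] at he; cases he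
    omega
  have h2 : ∀ s ∈ S, ∀ s' ∈ S, s ≠ s' → ¬ T.IsAncestor s s' := by
    rintro s hs s' hs' hne ⟨n, hn⟩
    have hn0 : n ≠ 0 := by
      intro e; subst e; exact hne hn.symm
    exact (hSmem s' hs').2 n (by omega) (hn ▸ (hSmem s hs).1)
  have h3 : ∀ k, (S.filter (fun s => T.depth s ≤ k)).card ≤ k := by
    intro k
    have hcard : (S.filter (fun s => T.depth s ≤ k)).card ≤ (Finset.Icc 1 k).card := by
      apply Finset.card_le_card_of_injOn
        (fun s => if h : T.TP p s then h.choose else 0)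
      · intro s hsk
        obtain ⟨hs, hdk⟩ := Finset.mem_filter.mp hsk
        have htp := (hSmem s hs).1
        simp only [dif_pos htp]
        obtain ⟨hle, he⟩ := htp.choose_spec
        have : htp.choose ≠ 0 := by
          intro e; rw [e, hp.1] at he; cases he
        exact Finset.mem_Icc.mpr ⟨by omega, by omega⟩
      · intro a ha b hb hab
        obtain ⟨haS, -⟩ := Finset.mem_filter.mp ha
        obtain ⟨hbS, -⟩ := Finset.mem_filter.mp hb
        have hta := (hSmem a haS).1
        have htb := (hSmem b hbS).1
        dsimp only at hab
        rw [dif_pos hta, dif_pos htb] at hab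
        have e1 := hta.choose_spec.2
        have e2 := htb.choose_spec.2
        rw [hab, e2] at e1
        exact (Option.some_injective V e1).symm
    simpa using hcard
  obtain ⟨ℓ, w, hw1, hw2, hw3⟩ := T.key (S.sum T.depth) S le_rfl h1 h2 h3
  -- the normalized strategy
  set q : ℕ → Option V := fun i => if 1 ≤ i ∧ i ≤ ℓ then some (w i) else none with hqdef
  have hqsome : ∀ i v, q i = some v → 1 ≤ i ∧ i ≤ ℓ ∧ v = w i := by
    intro i v hiv
    rw [hqdef] at hiv
    dsimp only at hiv
    by_cases h : 1 ≤ i ∧ i ≤ ℓ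
    · rw [if_pos h] at hiv
      exact ⟨h.1, h.2, (Option.some_injective V hiv).symm⟩
    · rw [if_neg h] at hiv; cases hiv
  have hqi : ∀ i, 1 ≤ i → i ≤ ℓ → q i = some (w i) := by
    intro i h1i h2i
    rw [hqdef]
    dsimp only
    rw [if_pos ⟨h1i, h2i⟩]
  have hq0 : q 0 = none := by
    rw [hqdef]; dsimp only; rw [if_neg (by omega)]
  have hq : T.Valid q := by
    refine ⟨hq0, fun t v htv => ?_⟩
    obtain ⟨ht1, ht2, rfl⟩ := hqsome t v htv
    constructor
    · intro hmem
      have := T.depth_le_of_mem_burn q (t - 1) hmem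
      rw [hw1 t ht1 ht2] at this
      omega
    · intro i hi he
      obtain ⟨hi1, hi2, hwe⟩ := hqsome i _ he
      have di := hw1 i hi1 hi2
      have dt := hw1 t ht1 ht2
      rw [hwe] at dt
      omega
  have hprot : ∀ v, FFTree.Protected q v ↔ ∃ j, 1 ≤ j ∧ j ≤ ℓ ∧ v = w j := by
    intro v
    constructor
    · rintro ⟨i, hi⟩
      obtain ⟨h1i, h2i, rfl⟩ := hqsome i v hi
      exact ⟨i, h1i, h2i, rfl⟩
    · rintro ⟨j, hj1, hj2, rfl⟩
      exact ⟨j, hqi j hj1 hj2⟩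
  have hTPq : ∀ j, 1 ≤ j → j ≤ ℓ → T.TP q (w j) := by
    intro j hj1 hj2
    exact ⟨j, by rw [hw1 j hj1 hj2], hqi j hj1 hj2⟩
  have hTPq' : ∀ x, T.TP q x → ∃ j, 1 ≤ j ∧ j ≤ ℓ ∧ x = w j := by
    rintro x ⟨i, hi, he⟩
    obtain ⟨h1i, h2i, rfl⟩ := hqsome i x he
    exact ⟨i, h1i, h2i, rfl⟩
  -- saved vertices of p are saved by q
  have hsub : ∀ v, T.Saved p v → T.Saved q v := by
    intro v hv
    rw [T.saved_iff hp] at hv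
    obtain ⟨n, hn⟩ := hv
    have hbound : ∀ m, T.TP p (T.parent^[m] v) → m ≤ T.depth v := by
      intro m hm
      by_contra h
      push_neg at h
      rw [T.iter_parent_eq_root m (le_of_lt h)] at hm
      exact hrootTP hm
    set n₀ := Nat.findGreatest (fun m => T.TP p (T.parent^[m] v)) (T.depth v) with hn₀def
    have hn₀ : T.TP p (T.parent^[n₀] v) :=
      Nat.findGreatest_spec (P := fun m => T.TP p (T.parent^[m] v)) (hbound n hn) hn
    have hmax : ∀ m, 1 ≤ m → ¬ T.TP p (T.parent^[m] (T.parent^[n₀] v)) := by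
      intro m hm
      rw [← Function.iterate_add_apply]
      rcases Nat.lt_or_ge (T.depth v) (m + n₀) with hgt | hle
      · rw [T.iter_parent_eq_root _ (le_of_lt hgt)]
        exact hrootTP
      · exact Nat.findGreatest_is_greatest
          (P := fun m => T.TP p (T.parent^[m] v)) (by omega) hle
    have hsS : T.parent^[n₀] v ∈ S :=
      Finset.mem_filter.mpr ⟨Finset.mem_univ _, hn₀, hmax⟩
    obtain ⟨j, hj1, hj2, hj3⟩ := hw3 _ hsS
    rw [T.saved_iff hq]
    obtain ⟨k, hk⟩ := hj3
    refine ⟨k + n₀, ?_⟩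
    rw [Function.iterate_add_apply, hk]
    exact hTPq j hj1 hj2
  refine ⟨q, hq, ?_, ℓ, ?_, ?_, ?_⟩
  · -- saved counts
    apply Finset.card_le_card
    intro v hv
    simp only [Finset.mem_filter, Finset.mem_univ, true_and] at hv ⊢
    exact hsub v hv
  · -- exactly one protected vertex per depth
    intro i hi1 hi2
    refine ⟨w i, ⟨(hprot (w i)).mpr ⟨i, hi1, hi2, rfl⟩, hw1 i hi1 hi2⟩, ?_⟩
    rintro v ⟨hv, hvd⟩
    obtain ⟨j, hj1, hj2, rfl⟩ := (hprot v).mp hv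
    rw [hw1 j hj1 hj2] at hvd
    rw [hvd]
  · -- protected depths in [1, ℓ]
    intro v hv
    obtain ⟨j, hj1, hj2, rfl⟩ := (hprot v).mp hv
    rw [hw1 j hj1 hj2]
    exact ⟨hj1, hj2⟩
  · -- proper ancestors of protected vertices burn
    intro v hv u hanc hne
    obtain ⟨j, hj1, hj2, rfl⟩ := (hprot v).mp hv
    obtain ⟨m, hm⟩ := hanc
    have hm0 : m ≠ 0 := by
      intro e; subst e; exact hne hm.symm
    rw [T.burns_iff hq]
    intro n htp
    obtain ⟨i, hi1, hi2, he⟩ := hTPq' _ htp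
    rw [← hm, ← Function.iterate_add_apply] at he
    have hdj : T.depth (w j) = j := hw1 j hj1 hj2
    have hdi : T.depth (w i) = i := hw1 i hi1 hi2
    rcases Nat.lt_or_ge (T.depth (w j)) (n + m) with hgt | hle
    · rw [T.iter_parent_eq_root _ (le_of_lt hgt)] at he
      rw [← he, T.depth_root] at hdi
      omega
    · have hdrop := T.depth_iter (n + m) (v := w j) hle
      rw [he, hdi] at hdrop
      have hij : i ≠ j := by omega
      exact hw2 i hi1 hi2 j hj1 hj2 hij ⟨n + m, he⟩
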